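/- Let a : ℝ → Matrix (Fin l) (Fin l) ℝ be continuous and let V₁, …, V_l : ℝ → ℝⁿ be differentiable curves such that for every i and every t ∈ ℝ, the derivative of V_i at t equals Σ_j a(t) i j • V_j(t) (i.e. HasDerivAt (V i) (Σ_j a t i j • V j t) t). Then the linear span of {V₁(t), …, V_l(t)} in ℝⁿ, as a submodule of ℝⁿ, is independent of t: for all s, t ∈ ℝ, Submodule.span ℝ {V₁(s), …, V_l(s)} = Submodule.span ℝ {V₁(t), …, V_l(t)}. -/

import Mathlib

open Set

/-- The matrix-to-CLM map `M ↦ mulVecLin M` as a linear map. -/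
noncomputable def mulVecCLM {l : ℕ} : Matrix (Fin l) (Fin l) ℝ →ₗ[ℝ]
    ((Fin l → ℝ) →L[ℝ] (Fin l → ℝ)) where
  toFun M := LinearMap.toContinuousLinearMap M.mulVecLin
  map_add' M N := by
    ext v
    simp [Matrix.add_mulVec]
  map_smul' c M := by
    ext v
    simp [Matrix.smul_mulVec]

lemma stmt11_span_le {l n : ℕ} (a : ℝ → Matrix (Fin l) (Fin l) ℝ) (ha : Continuous a)
    (V : Fin l → ℝ → (Fin n → ℝ))
    (hV : ∀ (i : Fin l) (t : ℝ), HasDerivAt (V i) (∑ j, a t i j • V j t) t)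
    (s t : ℝ) :
    Submodule.span ℝ (Set.range fun i => V i t) ≤
      Submodule.span ℝ (Set.range fun i => V i s) := by
  rw [Submodule.span_le]
  rintro _ ⟨i, rfl⟩
  rw [SetLike.mem_coe, ← Subspace.forall_mem_dualAnnihilator_apply_eq_zero_iff]
  intro φ hφ
  rw [Submodule.mem_dualAnnihilator] at hφ
  -- set up the curve u r = (φ (V i r))_i
  set u : ℝ → Fin l → ℝ := fun r i => φ (V i r) with hu
  have hder : ∀ r : ℝ, HasDerivAt u ((a r).mulVec (u r)) r := by
    intro r
    refine hasDerivAt_pi.2 fun i => ?_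
    have h := (LinearMap.toContinuousLinearMap φ).hasFDerivAt.comp_hasDerivAt r (hV i r)
    simpa [Matrix.mulVec, dotProduct, map_sum, map_smul, smul_eq_mul, hu, Function.comp_def] using h
  -- compact interval containing s and t
  set c : ℝ := min s t - 1 with hc
  set d : ℝ := max s t + 1 with hd
  have hcd : c ≤ d := by
    have h1 : min s t ≤ max s t := (min_le_left s t).trans (le_max_left s t)
    simp only [hc, hd]; linarith
  -- the CLM-valued coefficient and its bound on [c,d]
  set A : ℝ → ((Fin l → ℝ) →L[ℝ] (Fin l → ℝ)) := fun r => mulVecCLM (a r) with hA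
  have hAcont : Continuous A := mulVecCLM.continuous_of_finiteDimensional.comp ha
  obtain ⟨C, hC⟩ := (isCompact_Icc (a := c) (b := d)).exists_bound_of_continuousOn
    hAcont.continuousOn
  set K : NNReal := ⟨max C 0, le_max_right _ _⟩ with hK
  set v : ℝ → (Fin l → ℝ) → (Fin l → ℝ) := fun r x => A (projIcc c d hcd r) x with hv
  have hlip : ∀ r, LipschitzOnWith K (v r) (univ : Set (Fin l → ℝ)) := by
    intro r
    refine ((A (projIcc c d hcd r)).lipschitz.weaken ?_).lipschitzOnWith
    rw [← NNReal.coe_le_coe]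
    exact le_trans (hC _ (projIcc c d hcd r).2) (le_max_left _ _)
  have hs_mem : s ∈ Ioo c d := by
    constructor
    · have := min_le_left s t; simp only [hc]; linarith
    · have := le_max_left s t; simp only [hd]; linarith
  have ht_mem : t ∈ Icc c d := by
    constructor
    · have := min_le_right s t; simp only [hc]; linarith
    · have := le_max_right s t; simp only [hd]; linarith
  have hvu : ∀ r ∈ Ioo c d, v r (u r) = (a r).mulVec (u r) := by
    intro r hr
    simp only [hv, projIcc_of_mem hcd (Ioo_subset_Icc_self hr), hA]
    simp [mulVecCLM]
  have hucont : Continuous u := by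
    rw [continuous_iff_continuousAt]
    exact fun r => (hder r).continuousAt
  have key : EqOn u (fun _ => (0 : Fin l → ℝ)) (Icc c d) := by
    refine ODE_solution_unique_of_mem_Icc (fun r _ => hlip r) hs_mem hucont.continuousOn
      (fun r hr => (hvu r hr) ▸ hder r) (fun _ _ => mem_univ _)
      continuousOn_const (fun r hr => ?_) (fun _ _ => mem_univ _) ?_
    · have : v r (0 : Fin l → ℝ) = 0 := by simp [hv]
      rw [this]
      exact hasDerivAt_const r 0
    · funext i
      exact hφ (V i s) (Submodule.subset_span ⟨i, rfl⟩)
  have := key ht_mem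
  exact congrFun this i

/-- if curves `V 1, …, V l : ℝ → ℝⁿ` satisfy the linear differential
relation `∂V_i/∂t = Σ_j a t i j • V j t` with continuous coefficient matrix `a t`,
then the linear span of `{V 1 t, …, V l t}` in `ℝⁿ` is independent of `t`. -/
theorem stmt11 {l n : ℕ} (a : ℝ → Matrix (Fin l) (Fin l) ℝ) (ha : Continuous a)
    (V : Fin l → ℝ → (Fin n → ℝ))
    (hV : ∀ (i : Fin l) (t : ℝ), HasDerivAt (V i) (∑ j, a t i j • V j t) t)
    (s t : ℝ) :
    Submodule.span ℝ (Set.range fun i => V i s) =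
      Submodule.span ℝ (Set.range fun i => V i t) := by
  exact le_antisymm (stmt11_span_le a ha V hV t s) (stmt11_span_le a ha V hV s t)
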